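/- Let Φ : B(H_A) → B(H_B) be a quantum channel between finite-dimensional spaces with dual (adjoint) unital completely positive map Φ* : B(H_B) → B(H_A). If B is a positive operator in B(H_B) such that rank Φ*(B) = r, then rank B ≤ min{ dim ker Φ* + r², dim H_B }. -/

import Mathlib

open Matrix
open scoped ComplexOrder
noncomputable section

abbrev Mat (n : ℕ) := Matrix (Fin n) (Fin n) ℂ

/-- Complete positivity of a linear map between matrix algebras:
all ampliations `id_k ⊗ Φ` map positive semidefinite matrices to positive
semidefinite matrices. -/
def IsCP {m n : Type*} [Fintype m] [Fintype n]
    (Φ : Matrix m m ℂ →ₗ[ℂ] Matrix n n ℂ) : Prop :=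
  ∀ (k : ℕ) (M : Matrix (Fin k × m) (Fin k × m) ℂ), M.PosSemidef →
    (Matrix.of fun p q : Fin k × n =>
      Φ (Matrix.of fun a b => M (p.1, a) (q.1, b)) p.2 q.2).PosSemidef

/-- Quantum channel: completely positive and trace preserving. -/
def IsChannel {m n : Type*} [Fintype m] [Fintype n]
    (Φ : Matrix m m ℂ →ₗ[ℂ] Matrix n n ℂ) : Prop :=
  IsCP Φ ∧ ∀ ρ : Matrix m m ℂ, (Φ ρ).trace = ρ.trace

/-- A quantum state: positive semidefinite matrix of unit trace. -/
def IsState {n : Type*} [Fintype n] (ρ : Matrix n n ℂ) : Prop :=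
  ρ.PosSemidef ∧ ρ.trace = 1

/-- Functional-calculus logarithm of a Hermitian matrix (with log 0 = 0 on the kernel). -/
def matLog {n : ℕ} (A : Mat n) : Mat n :=
  if h : A.IsHermitian then
    (h.eigenvectorUnitary : Mat n) *
      Matrix.diagonal (fun i => (Real.log (h.eigenvalues i) : ℂ)) *
      (star (h.eigenvectorUnitary : Mat n))
  else 0

/-- Quantum relative entropy  H(ρ‖σ) = Tr ρ (log ρ − log σ). -/
def relEntropy {n : ℕ} (ρ σ : Mat n) : ℝ :=
  ((ρ * (matLog ρ - matLog σ)).trace).re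

/-- von Neumann entropy. -/
def vnEntropy {n : Type*} [Fintype n] [DecidableEq n] (ρ : Matrix n n ℂ) : ℝ :=
  if h : ρ.IsHermitian then -∑ i, (h.eigenvalues i) * Real.log (h.eigenvalues i) else 0

/-- Partial trace over the second factor. -/
def ptrSnd {m k : Type*} [Fintype k] (M : Matrix (m × k) (m × k) ℂ) : Matrix m m ℂ :=
  Matrix.of fun a a' => ∑ b, M (a, b) (a', b)

/-- Partial trace over the first factor. -/
def ptrFst {m k : Type*} [Fintype m] (M : Matrix (m × k) (m × k) ℂ) : Matrix k k ℂ :=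
  Matrix.of fun b b' => ∑ a, M (a, b) (a, b')


set_option linter.unusedSectionVars false
namespace RankAux

variable {q p r : Type*} [Fintype q] [Fintype p] [Fintype r]

def lmulMap (A : Matrix p q ℂ) : Matrix q r ℂ →ₗ[ℂ] Matrix p r ℂ where
  toFun X := A * X
  map_add' X Y := by simp [Matrix.mul_add]
  map_smul' c X := by simp [Matrix.mul_smul]

def rmulMap (A : Matrix q r ℂ) : Matrix p q ℂ →ₗ[ℂ] Matrix p r ℂ where
  toFun X := X * A
  map_add' X Y := by simp [Matrix.add_mul]
  map_smul' c X := by simp [Matrix.smul_mul]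

@[simp] lemma lmulMap_apply (A : Matrix p q ℂ) (X : Matrix q r ℂ) :
    lmulMap (r := r) A X = A * X := rfl
@[simp] lemma rmulMap_apply (A : Matrix q r ℂ) (X : Matrix p q ℂ) :
    rmulMap (p := p) A X = X * A := rfl

variable {m n : Type*} [Fintype m] [Fintype n] [DecidableEq m] [DecidableEq n]

lemma isCP_pos {Φ : Matrix m m ℂ →ₗ[ℂ] Matrix n n ℂ} (hΦ : IsCP Φ)
    {A : Matrix m m ℂ} (hA : A.PosSemidef) : (Φ A).PosSemidef := by
  have h := hΦ 1 (A.submatrix Prod.snd Prod.snd) (hA.submatrix _)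
  have h2 := h.submatrix (fun b : n => ((0 : Fin 1), b))
  exact h2


variable {m n : Type*} [Fintype m] [Fintype n] [DecidableEq m] [DecidableEq n]

lemma trace_mul_vecMulVec (M : Matrix m m ℂ) (x y : m → ℂ) :
    (M * vecMulVec x y).trace = y ⬝ᵥ (M *ᵥ x) := by
  simp only [Matrix.trace, Matrix.diag, Matrix.mul_apply, vecMulVec_apply, dotProduct,
    Matrix.mulVec, dotProduct, Finset.mul_sum]
  congr 1; ext k
  congr 1; ext l
  ring

lemma posSemidef_vecMulVec_star (x : m → ℂ) : (vecMulVec x (star x)).PosSemidef := by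
  rw [posSemidef_iff_dotProduct_mulVec]
  constructor
  · ext i j
    simp [conjTranspose_apply, vecMulVec_apply, mul_comm]
  · intro v
    have h0 : (vecMulVec x (star x)) *ᵥ v = (star x ⬝ᵥ v) • x := by
      ext i; simp [Matrix.mulVec, vecMulVec_apply, dotProduct, Finset.mul_sum, mul_comm,
        mul_left_comm]
    have h1 : star v ⬝ᵥ ((star x ⬝ᵥ v) • x) = (star x ⬝ᵥ v) * (star v ⬝ᵥ x) := by
      simp [dotProduct_smul, smul_eq_mul]
    have h2 : star v ⬝ᵥ x = star (star x ⬝ᵥ v) := by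
      simp [dotProduct, mul_comm]
    rw [h0, h1, h2]
    exact mul_star_self_nonneg _

/-- positive/negative part decomposition of a Hermitian matrix -/
lemma exists_posSemidef_sub {A : Matrix m m ℂ} (hA : A.IsHermitian) :
    ∃ P N : Matrix m m ℂ, P.PosSemidef ∧ N.PosSemidef ∧ A = P - N := by
  set U : Matrix m m ℂ := (hA.eigenvectorUnitary : Matrix m m ℂ) with hU
  have hpos : ∀ f : m → ℝ, (∀ i, 0 ≤ f i) →
      (U * diagonal (fun i => (f i : ℂ)) * Uᴴ).PosSemidef := by
    intro f hf
    refine Matrix.PosSemidef.mul_mul_conjTranspose_same ?_ U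
    refine Matrix.posSemidef_diagonal_iff.mpr fun i => ?_
    exact_mod_cast Complex.zero_le_real.mpr (hf i)
  refine ⟨U * diagonal (fun i => ((max (hA.eigenvalues i) 0 : ℝ) : ℂ)) * Uᴴ,
    U * diagonal (fun i => ((max (-hA.eigenvalues i) 0 : ℝ) : ℂ)) * Uᴴ,
    hpos _ (fun i => le_max_right _ _), hpos _ (fun i => le_max_right _ _), ?_⟩
  have : A = U * diagonal (fun i => (hA.eigenvalues i : ℂ)) * Uᴴ := by
    conv_lhs => rw [hA.spectral_theorem]
    rfl
  have h2 : (diagonal (fun i => ((max (hA.eigenvalues i) 0 : ℝ) : ℂ)) -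
      diagonal (fun i => ((max (-hA.eigenvalues i) 0 : ℝ) : ℂ))) =
      diagonal (fun i => (hA.eigenvalues i : ℂ)) := by
    rw [diagonal_sub]
    refine congrArg diagonal (funext fun i => ?_)
    show ((max (hA.eigenvalues i) 0 : ℝ) : ℂ) - ((max (-hA.eigenvalues i) 0 : ℝ) : ℂ) = _
    rw [← Complex.ofReal_sub, max_zero_sub_max_neg_zero_eq_self]
  calc A = U * diagonal (fun i => (hA.eigenvalues i : ℂ)) * Uᴴ := this
    _ = _ := by rw [← h2, Matrix.mul_sub, Matrix.sub_mul]

variable {Φ : Matrix m m ℂ →ₗ[ℂ] Matrix n n ℂ}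

lemma map_isHermitian (hpos : ∀ A : Matrix m m ℂ, A.PosSemidef → (Φ A).PosSemidef)
    {A : Matrix m m ℂ} (hA : A.IsHermitian) : (Φ A).IsHermitian := by
  obtain ⟨P, N, hP, hN, rfl⟩ := exists_posSemidef_sub hA
  rw [map_sub]
  exact (hpos P hP).isHermitian.sub (hpos N hN).isHermitian

lemma map_conjTranspose (hpos : ∀ A : Matrix m m ℂ, A.PosSemidef → (Φ A).PosSemidef)
    (A : Matrix m m ℂ) : Φ Aᴴ = (Φ A)ᴴ := by
  set S := A + Aᴴ with hSdef
  set T := (Complex.I : ℂ) • (A - Aᴴ) with hTdef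
  have hS : S.IsHermitian := by
    unfold Matrix.IsHermitian
    rw [hSdef, conjTranspose_add, conjTranspose_conjTranspose, add_comm]
  have hT : T.IsHermitian := by
    unfold Matrix.IsHermitian
    rw [hTdef, conjTranspose_smul, conjTranspose_sub, conjTranspose_conjTranspose]
    rw [show (star (Complex.I) : ℂ) = -Complex.I by simp]
    rw [neg_smul, smul_sub, smul_sub]
    abel
  have h1 := (map_isHermitian hpos hS).eq
  have h2 := (map_isHermitian hpos hT).eq
  have e1 : (2 : ℂ) • Aᴴ = S + (Complex.I : ℂ) • T := by
    rw [hSdef, hTdef]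
    ext i j
    simp only [Matrix.add_apply, Matrix.sub_apply, Matrix.smul_apply, conjTranspose_apply,
      smul_eq_mul]
    linear_combination (star (A j i) - A i j) * Complex.I_sq
  have e2 : (2 : ℂ) • A = S - (Complex.I : ℂ) • T := by
    rw [hSdef, hTdef]
    ext i j
    simp only [Matrix.add_apply, Matrix.sub_apply, Matrix.smul_apply, conjTranspose_apply,
      smul_eq_mul]
    linear_combination (A i j - star (A j i)) * Complex.I_sq
  apply smul_right_injective (Matrix n n ℂ) (two_ne_zero (α := ℂ))
  calc (2 : ℂ) • Φ Aᴴ = Φ ((2 : ℂ) • Aᴴ) := (LinearMap.map_smul _ _ _).symm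
    _ = Φ S + Complex.I • Φ T := by rw [e1, map_add, Φ.map_smul Complex.I T]
    _ = (Φ S - Complex.I • Φ T)ᴴ := by
        rw [conjTranspose_sub, conjTranspose_smul, h1, h2,
          show (star (Complex.I) : ℂ) = -Complex.I by simp, neg_smul, sub_neg_eq_add]
    _ = (Φ ((2 : ℂ) • A))ᴴ := by rw [e2, map_sub, Φ.map_smul Complex.I T]
    _ = (2 : ℂ) • (Φ A)ᴴ := by rw [LinearMap.map_smul, conjTranspose_smul, star_ofNat]

lemma trace_mul_nonneg {A B : Matrix n n ℂ} (hA : A.PosSemidef) (hB : B.PosSemidef) :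
    0 ≤ (A * B).trace := by
  obtain ⟨C, rfl⟩ : ∃ C : Matrix n n ℂ, A = Cᴴ * C := by
    open MatrixOrder in
    exact CStarAlgebra.nonneg_iff_eq_star_mul_self.mp hA.nonneg
  rw [Matrix.mul_assoc, Matrix.trace_mul_comm, Matrix.mul_assoc]
  have h := hB.mul_mul_conjTranspose_same C
  calc (0:ℂ) = ∑ i : n, 0 := by simp
  _ ≤ ∑ i, (C * B * Cᴴ) i i := by
      apply Finset.sum_le_sum
      intro i _
      have h3 := h.dotProduct_mulVec_nonneg (Pi.single i 1)
      have e : star (Pi.single i 1 : n → ℂ) ⬝ᵥ ((C * B * Cᴴ) *ᵥ Pi.single i 1) =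
          (C * B * Cᴴ) i i := by
        simp [dotProduct, Pi.single_apply, Matrix.mulVec, apply_ite, Finset.sum_ite_eq']
      rwa [e] at h3
  _ = (C * (B * Cᴴ)).trace := by rw [← Matrix.mul_assoc]; rfl


lemma star_single_one (a : m) : star (Pi.single a (1:ℂ) : m → ℂ) = (Pi.single a 1 : m → ℂ) := by
  ext k
  simp [Pi.single_apply, apply_ite]

lemma conjTranspose_vecMulVec (x y : m → ℂ) :
    (vecMulVec x y)ᴴ = vecMulVec (star y) (star x) := by
  ext i j
  simp [conjTranspose_apply, vecMulVec_apply, mul_comm]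

lemma entry_eq_trace (M : Matrix m m ℂ) (a b : m) :
    M b a = (M * vecMulVec (Pi.single a 1) (Pi.single b 1)).trace := by
  rw [trace_mul_vecMulVec]
  simp [dotProduct, Matrix.mulVec, Pi.single_apply, apply_ite, mul_comm]

lemma dual_posSemidef {Φd : Matrix n n ℂ →ₗ[ℂ] Matrix m m ℂ}
    (hpos : ∀ A : Matrix m m ℂ, A.PosSemidef → (Φ A).PosSemidef)
    (hdual : ∀ (A : Matrix m m ℂ) (B : Matrix n n ℂ), (Φ A * B).trace = (A * Φd B).trace)
    {B : Matrix n n ℂ} (hB : B.PosSemidef) : (Φd B).PosSemidef := by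
  have key : ∀ a b : m, (Φd B) b a =
      (Φ (vecMulVec (Pi.single a 1) (Pi.single b 1)) * B).trace := by
    intro a b
    rw [entry_eq_trace (Φd B) a b, Matrix.trace_mul_comm, ← hdual]
  have herm : (Φd B).IsHermitian := by
    have h : ∀ i j, star ((Φd B) j i) = (Φd B) i j := by
      intro i j
      rw [key i j, key j i, ← Matrix.trace_conjTranspose, conjTranspose_mul,
        hB.isHermitian.eq, ← map_conjTranspose hpos, conjTranspose_vecMulVec,
        star_single_one, star_single_one, Matrix.trace_mul_comm]
    exact Matrix.ext fun i j => by rw [conjTranspose_apply, h]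
  refine posSemidef_iff_dotProduct_mulVec.mpr ⟨herm, fun x => ?_⟩
  have e : star x ⬝ᵥ (Φd B) *ᵥ x = (Φ (vecMulVec x (star x)) * B).trace := by
    rw [← trace_mul_vecMulVec, Matrix.trace_mul_comm, ← hdual]
  rw [e]
  exact trace_mul_nonneg (hpos _ (posSemidef_vecMulVec_star x)) hB


lemma vecMulVec_mulVec' (x y v : m → ℂ) : vecMulVec x y *ᵥ v = (y ⬝ᵥ v) • x := by
  ext i
  simp [Matrix.mulVec, vecMulVec_apply, dotProduct, Finset.mul_sum, mul_comm, mul_left_comm]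

lemma cs_posSemidef (y : m → ℂ) :
    ((((∑ a, Complex.normSq (y a) : ℝ)) : ℂ) • (1 : Matrix m m ℂ) -
      vecMulVec y (star y)).PosSemidef := by
  set c : ℝ := ∑ a, Complex.normSq (y a) with hc
  rw [posSemidef_iff_dotProduct_mulVec]
  constructor
  · have h1 : ((c : ℂ) • (1 : Matrix m m ℂ))ᴴ = (c : ℂ) • 1 := by
      rw [conjTranspose_smul, conjTranspose_one, RCLike.star_def, Complex.conj_ofReal]
    have h2 : (vecMulVec y (star y))ᴴ = vecMulVec y (star y) := by
      rw [conjTranspose_vecMulVec, star_star]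
    exact Matrix.IsHermitian.sub h1 h2
  · intro x
    rw [sub_mulVec, dotProduct_sub, smul_mulVec, one_mulVec, dotProduct_smul,
      vecMulVec_mulVec', dotProduct_smul]
    set t : ℂ := star y ⬝ᵥ x with ht
    have hxy : star x ⬝ᵥ y = star t := by
      simp [ht, dotProduct, mul_comm]
    have hxx : star x ⬝ᵥ x = ((∑ a, Complex.normSq (x a) : ℝ) : ℂ) := by
      push_cast
      simp only [dotProduct, Pi.star_apply, RCLike.star_def]
      congr 1
      ext a
      rw [mul_comm, Complex.mul_conj]
    have habs : t * star t = ((Complex.normSq t : ℝ) : ℂ) := by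
      rw [RCLike.star_def, Complex.mul_conj]
    rw [hxy, hxx, smul_eq_mul, smul_eq_mul, habs, ← Complex.ofReal_mul, ← Complex.ofReal_sub]
    rw [Complex.zero_le_real, sub_nonneg]
    have hsum : t = ∑ a, (starRingEnd ℂ) (y a) * x a := rfl
    calc Complex.normSq t = ‖t‖^2 := (Complex.sq_norm t).symm
      _ ≤ (∑ a, ‖y a‖ * ‖x a‖)^2 := by
          apply pow_le_pow_left₀ (norm_nonneg _)
          rw [hsum]
          refine le_trans (norm_sum_le _ _) ?_
          apply le_of_eq
          congr 1
          ext a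
          rw [norm_mul, Complex.norm_conj]
      _ ≤ (∑ a, ‖y a‖^2) * (∑ a, ‖x a‖^2) :=
          Finset.sum_mul_sq_le_sq_mul_sq _ _ _
      _ = c * ∑ a, Complex.normSq (x a) := by simp [Complex.sq_norm, hc]

lemma map_vecMulVec_eq_zero {M : Type*} [AddCommGroup M] [Module ℂ M]
    (G : Matrix m m ℂ →ₗ[ℂ] M) (h : ∀ w : m → ℂ, G (vecMulVec w (star w)) = 0)
    (Z : Matrix m m ℂ) : G Z = 0 := by
  have h2 : ∀ v w : m → ℂ, G (vecMulVec v (star w)) = 0 := by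
    intro v w
    have key : vecMulVec v (star w) =
        (2⁻¹ : ℂ) • (vecMulVec (v + w) (star (v + w)) - vecMulVec v (star v)
          - vecMulVec w (star w))
        + (Complex.I * 2⁻¹) • (vecMulVec (v + Complex.I • w) (star (v + Complex.I • w))
            - vecMulVec v (star v) - vecMulVec w (star w)) := by
      ext i j
      simp only [Matrix.add_apply, Matrix.sub_apply, Matrix.smul_apply, vecMulVec_apply,
        Pi.add_apply, Pi.star_apply, Pi.smul_apply, star_add, star_mul', smul_eq_mul,
        RCLike.star_def, _root_.map_mul, Complex.conj_I]
      linear_combination ((2⁻¹ : ℂ) * (v i * (starRingEnd ℂ) (w j)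
        - w i * (starRingEnd ℂ) (v j) + Complex.I * (w i * (starRingEnd ℂ) (w j))))
        * Complex.I_sq
    rw [key, map_add, _root_.map_smul, _root_.map_smul, map_sub, map_sub, map_sub, map_sub,
      h v, h w, h (v + w), h (v + Complex.I • w)]
    simp
  have hZ : Z = ∑ a : m, ∑ b : m, Z a b • vecMulVec (Pi.single a 1) (star (Pi.single b 1)) := by
    ext i j
    simp [Matrix.sum_apply, Matrix.smul_apply, vecMulVec_apply, star_single_one,
      Pi.single_apply, mul_ite, ite_mul, Finset.sum_ite_eq', apply_ite]
  rw [hZ]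
  rw [map_sum]
  refine Finset.sum_eq_zero fun a _ => ?_
  rw [map_sum]
  refine Finset.sum_eq_zero fun b _ => ?_
  rw [_root_.map_smul, h2, smul_zero]

end RankAux

set_option maxHeartbeats 1000000 in
/-- If `B ≥ 0` and `rank Φ*(B) = r`, then
`rank B ≤ min (dim ker Φ* + r²) (dim H_B)`. -/
theorem rank_le_of_rank_dual_apply
    {nA nB : ℕ}
    (Φ : Mat nA →ₗ[ℂ] Mat nB) (hΦ : IsChannel Φ)
    (Φd : Mat nB →ₗ[ℂ] Mat nA)
    (hdual : ∀ (A : Mat nA) (B : Mat nB), (Φ A * B).trace = (A * Φd B).trace)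
    (B : Mat nB) (hB : B.PosSemidef)
    (r : ℕ) (hr : (Φd B).rank = r) :
    B.rank ≤ min (Module.finrank ℂ (LinearMap.ker Φd) + r ^ 2) nB := by
  classical
  have hpos : ∀ A : Mat nA, A.PosSemidef → (Φ A).PosSemidef :=
    fun A hA => RankAux.isCP_pos hΦ.1 hA
  have hdpsd : ∀ {X : Mat nB}, X.PosSemidef → (Φd X).PosSemidef :=
    fun hX => RankAux.dual_posSemidef hpos hdual hX
  have hDpsd : (Φd B).PosSemidef := hdpsd hB
  set D : Mat nA := Φd B with hD
  have hBH := hB.isHermitian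
  have hDH : D.IsHermitian := hDpsd.isHermitian
  set ι := {i // hBH.eigenvalues i ≠ 0} with hι
  set κ := {i // hDH.eigenvalues i ≠ 0} with hκ
  set W : Mat nB := (hBH.eigenvectorUnitary : Mat nB) with hW
  set V : Matrix (Fin nB) ι ℂ := Matrix.of fun i a => W i a.1 with hVdef
  set Wd : Mat nA := (hDH.eigenvectorUnitary : Mat nA) with hWd
  set U : Matrix (Fin nA) κ ℂ := Matrix.of fun i a => Wd i a.1 with hUdef
  have hWW : Wᴴ * W = 1 := by
    rw [hW, ← Matrix.star_eq_conjTranspose]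
    exact Unitary.coe_star_mul_self _
  have hWdWd : Wdᴴ * Wd = 1 := by
    rw [hWd, ← Matrix.star_eq_conjTranspose]
    exact Unitary.coe_star_mul_self _
  have hV : Vᴴ * V = 1 := by
    ext a b
    have h1 : (Vᴴ * V) a b = (Wᴴ * W) a.1 b.1 := by
      simp [hVdef, Matrix.mul_apply, conjTranspose_apply]
    rw [h1, hWW]
    by_cases hab : a = b
    · subst hab
      simp [Matrix.one_apply]
    · rw [Matrix.one_apply_ne hab, Matrix.one_apply_ne (fun h => hab (Subtype.ext h))]
  have hU : Uᴴ * U = 1 := by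
    ext a b
    have h1 : (Uᴴ * U) a b = (Wdᴴ * Wd) a.1 b.1 := by
      simp [hUdef, Matrix.mul_apply, conjTranspose_apply]
    rw [h1, hWdWd]
    by_cases hab : a = b
    · subst hab
      simp [Matrix.one_apply]
    · rw [Matrix.one_apply_ne hab, Matrix.one_apply_ne (fun h => hab (Subtype.ext h))]
  have hBspec : B = V * diagonal (fun a : ι => (hBH.eigenvalues a.1 : ℂ)) * Vᴴ := by
    ext i j
    have lhs : B i j = ∑ k, W i k * (hBH.eigenvalues k : ℂ) * star (W j k) := by
      conv_lhs => rw [hBH.spectral_theorem, Unitary.conjStarAlgAut_apply]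
      rw [Matrix.mul_apply]
      congr 1
      ext k
      rw [Matrix.mul_diagonal, Matrix.star_apply]
      rfl
    have rhs : (V * diagonal (fun a : ι => (hBH.eigenvalues a.1 : ℂ)) * Vᴴ) i j =
        ∑ a : ι, W i a.1 * (hBH.eigenvalues a.1 : ℂ) * star (W j a.1) := by
      rw [Matrix.mul_apply]
      congr 1
      ext a
      rw [Matrix.mul_diagonal, conjTranspose_apply]
      rfl
    rw [lhs, rhs, ← Fintype.sum_subtype_add_sum_subtype (fun k => hBH.eigenvalues k ≠ 0)
      (fun k => W i k * (hBH.eigenvalues k : ℂ) * star (W j k))]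
    have hz : ∑ a : {k // ¬ hBH.eigenvalues k ≠ 0},
        W i a.1 * (hBH.eigenvalues a.1 : ℂ) * star (W j a.1) = 0 := by
      apply Finset.sum_eq_zero
      intro a _
      have : hBH.eigenvalues a.1 = 0 := not_not.mp a.2
      rw [this]
      simp
    rw [hz, add_zero]
  have hDspec : D = U * diagonal (fun a : κ => (hDH.eigenvalues a.1 : ℂ)) * Uᴴ := by
    ext i j
    have lhs : D i j = ∑ k, Wd i k * (hDH.eigenvalues k : ℂ) * star (Wd j k) := by
      conv_lhs => rw [hDH.spectral_theorem, Unitary.conjStarAlgAut_apply]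
      rw [Matrix.mul_apply]
      congr 1
      ext k
      rw [Matrix.mul_diagonal, Matrix.star_apply]
      rfl
    have rhs : (U * diagonal (fun a : κ => (hDH.eigenvalues a.1 : ℂ)) * Uᴴ) i j =
        ∑ a : κ, Wd i a.1 * (hDH.eigenvalues a.1 : ℂ) * star (Wd j a.1) := by
      rw [Matrix.mul_apply]
      congr 1
      ext a
      rw [Matrix.mul_diagonal, conjTranspose_apply]
      rfl
    rw [lhs, rhs, ← Fintype.sum_subtype_add_sum_subtype (fun k => hDH.eigenvalues k ≠ 0)
      (fun k => Wd i k * (hDH.eigenvalues k : ℂ) * star (Wd j k))]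
    have hz : ∑ a : {k // ¬ hDH.eigenvalues k ≠ 0},
        Wd i a.1 * (hDH.eigenvalues a.1 : ℂ) * star (Wd j a.1) = 0 := by
      apply Finset.sum_eq_zero
      intro a _
      have : hDH.eigenvalues a.1 = 0 := not_not.mp a.2
      rw [this]
      simp
    rw [hz, add_zero]
  set P : Mat nA := U * Uᴴ with hP
  have hDP : D * ((1 : Mat nA) - P) = 0 := by
    rw [Matrix.mul_sub, Matrix.mul_one, sub_eq_zero]
    conv_lhs => rw [hDspec]
    conv_rhs => rw [hDspec]
    rw [hP, Matrix.mul_assoc (U * diagonal _) Uᴴ (U * Uᴴ), ← Matrix.mul_assoc Uᴴ U Uᴴ, hU,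
      Matrix.one_mul]
  set SV : Matrix ι ι ℂ →ₗ[ℂ] Mat nB := RankAux.rmulMap Vᴴ ∘ₗ RankAux.lmulMap V with hSV
  have hSVapp : ∀ Z, SV Z = V * Z * Vᴴ := fun Z => rfl
  have stepA : ∀ Z : Matrix ι ι ℂ, P * (Φd (SV Z) * P) = Φd (SV Z) := by
    set G : Matrix ι ι ℂ →ₗ[ℂ] Mat nA :=
      (LinearMap.mulLeft ℂ P ∘ₗ LinearMap.mulRight ℂ P ∘ₗ Φd ∘ₗ SV) - (Φd ∘ₗ SV) with hG
    have hGapp : ∀ Z, G Z = P * (Φd (SV Z) * P) - Φd (SV Z) := fun Z => rfl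
    have hGzero : ∀ w : ι → ℂ, G (vecMulVec w (star w)) = 0 := by
      intro w
      have hXpsd : (V * vecMulVec w (star w) * Vᴴ).PosSemidef :=
        (RankAux.posSemidef_vecMulVec_star w).mul_mul_conjTranspose_same V
      set d : ι → ℝ := fun a => Real.sqrt (hBH.eigenvalues a.1) with hd
      have hdpos : ∀ a : ι, 0 < d a := fun a =>
        Real.sqrt_pos.mpr (lt_of_le_of_ne (hB.eigenvalues_nonneg a.1) (Ne.symm a.2))
      set y : ι → ℂ := fun a => w a / (d a : ℂ) with hy
      have hwy : ∀ a, w a = (d a : ℂ) * y a := by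
        intro a
        have hne : ((d a : ℝ) : ℂ) ≠ 0 := by exact_mod_cast (hdpos a).ne'
        rw [hy, mul_comm]
        exact (div_mul_cancel₀ (w a) hne).symm
      set c : ℝ := ∑ a, Complex.normSq (y a) with hc
      have hdiagH : (diagonal (fun a : ι => (d a : ℂ)))ᴴ = diagonal (fun a : ι => (d a : ℂ)) := by
        ext i j
        by_cases h : i = j
        · subst h
          simp [conjTranspose_apply, diagonal_apply_eq, Complex.conj_ofReal]
        · simp [conjTranspose_apply, diagonal_apply_ne _ h, diagonal_apply_ne _ (Ne.symm h)]
      have hdiag : vecMulVec w (star w) =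
          diagonal (fun a : ι => (d a : ℂ)) * vecMulVec y (star y) *
            diagonal (fun a : ι => (d a : ℂ)) := by
        ext a b
        rw [Matrix.mul_diagonal, Matrix.diagonal_mul, vecMulVec_apply, vecMulVec_apply]
        simp only [Pi.star_apply, RCLike.star_def]
        rw [hwy a, hwy b]
        rw [_root_.map_mul, Complex.conj_ofReal]
        ring
      have hΛ : (c : ℂ) • diagonal (fun a : ι => (hBH.eigenvalues a.1 : ℂ)) -
          vecMulVec w (star w) =
          diagonal (fun a : ι => (d a : ℂ)) * ((c : ℂ) • 1 - vecMulVec y (star y)) *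
            diagonal (fun a : ι => (d a : ℂ)) := by
        rw [Matrix.mul_sub, Matrix.sub_mul, ← hdiag]
        congr 1
        rw [Matrix.mul_smul, Matrix.smul_mul, Matrix.mul_one, diagonal_mul_diagonal]
        have hdd : (fun a : ι => (d a : ℂ) * (d a : ℂ)) =
            fun a : ι => (hBH.eigenvalues a.1 : ℂ) := by
          funext a
          rw [← Complex.ofReal_mul, Real.mul_self_sqrt (hB.eigenvalues_nonneg a.1)]
        rw [hdd]
      have hcsd : ((c : ℂ) • diagonal (fun a : ι => (hBH.eigenvalues a.1 : ℂ)) -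
          vecMulVec w (star w)).PosSemidef := by
        rw [hΛ]
        have h2 := (RankAux.cs_posSemidef y).mul_mul_conjTranspose_same
          (diagonal (fun a : ι => (d a : ℂ)))
        rwa [hdiagH] at h2
      have hK2 : ((c : ℂ) • B - V * vecMulVec w (star w) * Vᴴ).PosSemidef := by
        have he : (c : ℂ) • B - V * vecMulVec w (star w) * Vᴴ =
            V * ((c : ℂ) • diagonal (fun a : ι => (hBH.eigenvalues a.1 : ℂ)) -
              vecMulVec w (star w)) * Vᴴ := by
          rw [Matrix.mul_sub, Matrix.sub_mul]
          congr 1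
          conv_lhs => rw [hBspec]
          rw [Matrix.mul_smul, Matrix.smul_mul]
        rw [he]
        exact hcsd.mul_mul_conjTranspose_same V
      set Y : Mat nA := Φd (V * vecMulVec w (star w) * Vᴴ) with hY
      have hYpsd : Y.PosSemidef := hdpsd hXpsd
      have hsq : ((c : ℂ) • D - Y).PosSemidef := by
        have he : (c : ℂ) • D - Y = Φd ((c : ℂ) • B - V * vecMulVec w (star w) * Vᴴ) := by
          rw [map_sub, _root_.map_smul, hY, hD]
        rw [he]
        exact hdpsd hK2
      have hker : ∀ v : Fin nA → ℂ, D *ᵥ v = 0 → Y *ᵥ v = 0 := by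
        intro v hv
        have h1 := hYpsd.dotProduct_mulVec_nonneg v
        have h2 := hsq.dotProduct_mulVec_nonneg v
        rw [sub_mulVec, dotProduct_sub, smul_mulVec, hv, smul_zero, dotProduct_zero,
          zero_sub] at h2
        have h4 : star v ⬝ᵥ Y *ᵥ v ≤ 0 := neg_nonneg.mp h2
        have h3 : star v ⬝ᵥ Y *ᵥ v = 0 := le_antisymm h4 h1
        exact (hYpsd.dotProduct_mulVec_zero_iff v).mp h3
      have hYP : Y * ((1 : Mat nA) - P) = 0 := by
        ext i j
        have hcol : D *ᵥ (fun k => ((1 : Mat nA) - P) k j) = 0 := by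
          funext i'
          have hz : (D * ((1 : Mat nA) - P)) i' j = 0 := by rw [hDP]; rfl
          simpa [Matrix.mul_apply, Matrix.mulVec, dotProduct] using hz
        have he : (Y * ((1 : Mat nA) - P)) i j =
            (Y *ᵥ (fun k => ((1 : Mat nA) - P) k j)) i := by
          simp [Matrix.mul_apply, Matrix.mulVec, dotProduct]
        rw [he, hker _ hcol]
        rfl
      have hYP2 : Y * P = Y := by
        have h0 := hYP
        rw [Matrix.mul_sub, Matrix.mul_one, sub_eq_zero] at h0
        exact h0.symm
      have hPH : Pᴴ = P := by
        rw [hP, conjTranspose_mul, conjTranspose_conjTranspose]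
      have hPY : P * Y = Y := by
        calc P * Y = Pᴴ * Yᴴ := by rw [hPH, hYpsd.isHermitian.eq]
          _ = (Y * P)ᴴ := (conjTranspose_mul Y P).symm
          _ = Yᴴ := by rw [hYP2]
          _ = Y := hYpsd.isHermitian.eq
      rw [hGapp]
      rw [hSVapp]
      rw [← hY, hYP2, hPY, sub_self]
    intro Z
    have h0 := RankAux.map_vecMulVec_eq_zero G hGzero Z
    rw [hGapp] at h0
    exact sub_eq_zero.mp h0
  set F : Matrix ι ι ℂ →ₗ[ℂ] Matrix κ κ ℂ :=
    RankAux.rmulMap U ∘ₗ RankAux.lmulMap Uᴴ ∘ₗ Φd ∘ₗ SV with hF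
  have hFapp : ∀ Z, F Z = Uᴴ * Φd (SV Z) * U := fun Z => rfl
  have hkerF : ∀ Z ∈ LinearMap.ker F, SV Z ∈ LinearMap.ker Φd := by
    intro Z hZ
    rw [LinearMap.mem_ker] at hZ ⊢
    have h0 : Φd (SV Z) = P * (Φd (SV Z) * P) := (stepA Z).symm
    rw [hFapp] at hZ
    calc Φd (SV Z) = P * (Φd (SV Z) * P) := h0
      _ = U * (Uᴴ * Φd (SV Z) * U) * Uᴴ := by
          rw [hP]
          simp only [Matrix.mul_assoc]
      _ = 0 := by rw [hZ, Matrix.mul_zero, Matrix.zero_mul]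
  have hSVinj : Function.Injective SV := by
    have hleft : ∀ Z, Vᴴ * (SV Z) * V = Z := by
      intro Z
      rw [hSVapp]
      calc Vᴴ * (V * Z * Vᴴ) * V = (Vᴴ * V) * Z * (Vᴴ * V) := by simp only [Matrix.mul_assoc]
        _ = Z := by rw [hV, Matrix.one_mul, Matrix.mul_one]
    intro Z1 Z2 h12
    rw [← hleft Z1, ← hleft Z2, h12]
  have hRinj : Function.Injective (SV.restrict hkerF) := by
    intro z1 z2 h
    apply Subtype.ext
    apply hSVinj
    exact congrArg Subtype.val h
  have hcard1 : Module.finrank ℂ (LinearMap.ker F) ≤ Module.finrank ℂ (LinearMap.ker Φd) :=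
    LinearMap.finrank_le_finrank_of_injective hRinj
  have hcardι : Fintype.card ι = B.rank := by
    rw [hBH.rank_eq_card_non_zero_eigs]
  have hcardκ : Fintype.card κ = r := by
    rw [← hr, hDH.rank_eq_card_non_zero_eigs]
  have hdomain : Module.finrank ℂ (Matrix ι ι ℂ) = B.rank * B.rank := by
    rw [Module.finrank_matrix, hcardι]
    simp
  have hcodomain : Module.finrank ℂ (Matrix κ κ ℂ) = r * r := by
    rw [Module.finrank_matrix, hcardκ]
    simp
  have hrange : Module.finrank ℂ (LinearMap.range F) ≤ r * r := by
    rw [← hcodomain]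
    exact Submodule.finrank_le _
  have hcount := LinearMap.finrank_range_add_finrank_ker F
  rw [hdomain] at hcount
  have main : B.rank * B.rank ≤ Module.finrank ℂ (LinearMap.ker Φd) + r * r := by
    rw [← hcount]
    omega
  refine le_min ?_ ?_
  · rcases Nat.eq_zero_or_pos B.rank with h0 | h0
    · rw [h0]; exact Nat.zero_le _
    · calc B.rank ≤ B.rank * B.rank := Nat.le_mul_of_pos_left _ h0
        _ ≤ Module.finrank ℂ (LinearMap.ker Φd) + r * r := main
        _ = Module.finrank ℂ (LinearMap.ker Φd) + r ^ 2 := by rw [pow_two]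
  · simpa using B.rank_le_card_width

end
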